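/- arXiv:1908.06038 — 3 statements merged into one kernel-verified Lean document; each statement's English description precedes it below -/
import Mathlib

section
/- (Bonanno–Molica Bisci nonsmooth variational principle.) Let X be a reflexive real Banach space and let Φ, Ψ : X → ℝ be locally Lipschitz functionals such that Φ is sequentially weakly lower semicontinuous and coercive (Φ(u) → +∞ as ‖u‖ → +∞), and Ψ is sequentially weakly upper semicontinuous. For every r > inf_X Φ put φ(r) := inf_{u ∈ Φ⁻¹((−∞,r))} [ (sup_{v ∈ Φ⁻¹((−∞,r))} Ψ(v)) − Ψ(u) ] / (r − Φ(u)). Then for each r > inf_X Φ and each λ ∈ (0, 1/φ(r)), the restriction of J_λ := Φ − λΨ to Φ⁻¹((−∞,r)) attains a global minimum at some u₀ ∈ Φ⁻¹((−∞,r)), and u₀ is a generalized critical point of J_λ in X, i.e. (J_λ)⁰(u₀; z) ≥ 0 for every z ∈ X (indeed u₀ is a local minimum of J_λ on X). -/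
open Filter Topology

/-- The generalized (Clarke) directional derivative of `J` at `y` in the direction `z`. -/
noncomputable def clarkeDeriv {X : Type*} [NormedAddCommGroup X] [NormedSpace ℝ X]
    (J : X → ℝ) (y z : X) : ℝ :=
  Filter.limsup (fun p : X × ℝ => (J (p.1 + p.2 • z) - J p.1) / p.2)
    ((𝓝 y) ×ˢ (𝓝[>] (0 : ℝ)))

/-- A sequence converges weakly to `x` iff `φ (u n) → φ x` for every continuous
linear functional `φ`. -/
def WeakSeqTendsto {X : Type*} [NormedAddCommGroup X] [NormedSpace ℝ X]
    (u : ℕ → X) (x : X) : Prop :=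
  ∀ φ : X →L[ℝ] ℝ, Tendsto (fun n => φ (u n)) atTop (𝓝 (φ x))

section BMBAux

open Filter Topology NormedSpace Function TopologicalSpace


section Aux

variable {X : Type*} [NormedAddCommGroup X] [NormedSpace ℝ X]

/-- The topological dual of a normed space. -/
abbrev Dual (𝕜 : Type*) [NontriviallyNormedField 𝕜] (E : Type*) [SeminormedAddCommGroup E]
    [NormedSpace 𝕜 E] : Type _ := E →L[𝕜] 𝕜

/-- Hahn–Banach separation: a point outside a closed subspace admits a functional
vanishing on the subspace but not at the point. -/
lemma exists_dual_vanishing (Y : Submodule ℝ X) (hYc : IsClosed (Y : Set X)) {x : X}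
    (hx : x ∉ Y) : ∃ f : X →L[ℝ] ℝ, (∀ y ∈ Y, f y = 0) ∧ f x ≠ 0 := by
  obtain ⟨f, u, hfY, hfx⟩ := geometric_hahn_banach_closed_point (Y.convex) hYc hx
  have h0 : (0 : ℝ) < u := by simpa using hfY 0 (Y.zero_mem)
  refine ⟨f, fun y hy => ?_, ?_⟩
  · by_contra h
    have h2 := hfY _ (Y.smul_mem ((u + 1) / f y) hy)
    rw [map_smul, smul_eq_mul, div_mul_cancel₀ _ h] at h2
    linarith
  · exact ne_of_gt (lt_trans h0 hfx)

/-- A closed subspace of a reflexive space is reflexive. -/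
lemma subspace_reflexive (hrefl : Surjective (inclusionInDoubleDual ℝ X))
    (Y : Submodule ℝ X) (hYc : IsClosed (Y : Set X)) (L : Dual ℝ (Dual ℝ Y)) :
    ∃ y : Y, ∀ g : Dual ℝ Y, g y = L g := by
  -- the linear functional on `Dual ℝ X` given by restriction followed by `L`
  have hres : ∀ f : Dual ℝ X, ‖f.comp Y.subtypeL‖ ≤ ‖f‖ := by
    intro f
    refine ContinuousLinearMap.opNorm_le_bound _ (norm_nonneg f) fun y => ?_
    simpa using f.le_opNorm (y : X)
  let T : Dual ℝ X →ₗ[ℝ] ℝ :=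
    { toFun := fun f => L (f.comp Y.subtypeL)
      map_add' := fun f g => by
        simp only [ContinuousLinearMap.add_comp, map_add]
      map_smul' := fun c f => by
        simp only [ContinuousLinearMap.smul_comp, map_smul, RingHom.id_apply] }
  let Λ : Dual ℝ (Dual ℝ X) := T.mkContinuous ‖L‖ (by
    intro f
    calc ‖T f‖ ≤ ‖L‖ * ‖f.comp Y.subtypeL‖ := L.le_opNorm _
    _ ≤ ‖L‖ * ‖f‖ := by
        exact mul_le_mul_of_nonneg_left (hres f) (norm_nonneg L))
  obtain ⟨x, hxL⟩ := hrefl Λ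
  have hxval : ∀ f : Dual ℝ X, f x = L (f.comp Y.subtypeL) := by
    intro f
    have := congrFun (congrArg DFunLike.coe hxL) f
    rw [dual_def] at this
    exact this
  have hxY : x ∈ Y := by
    by_contra hxY
    obtain ⟨f, hf0, hfx⟩ := exists_dual_vanishing Y hYc hxY
    have hcomp : f.comp Y.subtypeL = 0 := by
      ext y; exact hf0 _ y.2
    have := hxval f
    rw [hcomp, map_zero] at this
    exact hfx this
  refine ⟨⟨x, hxY⟩, fun g => ?_⟩
  obtain ⟨f, hf, -⟩ := exists_extension_norm_eq Y g
  have hcomp : f.comp Y.subtypeL = g := by ext y; exact hf y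
  have := hxval f
  rw [hcomp] at this
  rw [← this]
  exact (hf ⟨x, hxY⟩).symm

end Aux


variable {X : Type*} [NormedAddCommGroup X] [NormedSpace ℝ X]

/-- If the dual of a normed space is separable, so is the space. -/
lemma separable_of_dual_separable [SeparableSpace (Dual ℝ X)] : SeparableSpace X := by
  set g : ℕ → Dual ℝ X := denseSeq (Dual ℝ X) with hg
  have hdense : DenseRange g := denseRange_denseSeq (Dual ℝ X)
  -- pick near-norming vectors
  have hw : ∀ n : ℕ, ∃ w : X, ‖w‖ ≤ 1 ∧ ‖g n‖ / 2 ≤ g n w := by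
    intro n
    rcases eq_or_ne (g n) 0 with h | h
    · exact ⟨0, by simp, by simp [h]⟩
    · have hpos : 0 < ‖g n‖ := norm_pos_iff.mpr h
      obtain ⟨x, hx1, hx2⟩ := (g n).exists_lt_apply_of_lt_opNorm (by linarith : ‖g n‖ / 2 < ‖g n‖)
      rcases le_or_gt 0 (g n x) with hs | hs
      · exact ⟨x, hx1.le, by rw [Real.norm_eq_abs, abs_of_nonneg hs] at hx2; linarith⟩
      · refine ⟨-x, by simpa using hx1.le, ?_⟩
        rw [map_neg]
        rw [Real.norm_eq_abs, abs_of_neg hs] at hx2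
        linarith
  choose w hw1 hw2 using hw
  set V : Submodule ℝ X := (Submodule.span ℝ (Set.range w)).topologicalClosure with hV
  have hVtop : V = ⊤ := by
    by_contra hne
    obtain ⟨x, hx⟩ : ∃ x : X, x ∉ V := by
      by_contra hall
      push_neg at hall
      exact hne (Submodule.eq_top_iff'.mpr hall)
    obtain ⟨f, hf0, hfx⟩ :=
      exists_dual_vanishing V (Submodule.isClosed_topologicalClosure _) hx
    have hfne : f ≠ 0 := fun h => hfx (by simp [h])
    have hfpos : 0 < ‖f‖ := norm_pos_iff.mpr hfne
    set f' : Dual ℝ X := ‖f‖⁻¹ • f with hf'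
    have hf'norm : ‖f'‖ = 1 := by
      rw [hf', norm_smul, norm_inv, norm_norm, inv_mul_cancel₀ (ne_of_gt hfpos)]
    have hf'0 : ∀ y ∈ V, f' y = 0 := by
      intro y hy
      simp [hf', hf0 y hy]
    obtain ⟨n, hn⟩ := Metric.denseRange_iff.mp hdense f' (1/4) (by norm_num)
    have hgn : ‖g n - f'‖ < 1/4 := by
      rw [← dist_eq_norm]
      rw [dist_comm]
      exact hn
    have hgnorm : 3/4 ≤ ‖g n‖ := by
      have h := norm_add_le (f' - g n) (g n)
      rw [sub_add_cancel, hf'norm, norm_sub_rev] at h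
      linarith
    have hwV : w n ∈ V := by
      exact Submodule.le_topologicalClosure _ (Submodule.subset_span ⟨n, rfl⟩)
    have h1 : g n (w n) = (g n - f') (w n) := by
      simp [hf'0 _ hwV]
    have h2 : (g n - f') (w n) ≤ 1/4 := by
      calc (g n - f') (w n) ≤ ‖(g n - f') (w n)‖ := le_abs_self _
      _ ≤ ‖g n - f'‖ * ‖w n‖ := (g n - f').le_opNorm _
      _ ≤ 1/4 * 1 := by
          apply mul_le_mul hgn.le (hw1 n) (norm_nonneg _) (by norm_num)
      _ = 1/4 := by norm_num
    have h3 := hw2 n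
    rw [h1] at h3
    linarith
  have : IsSeparable (Set.univ : Set X) := by
    have h1 : IsSeparable (V : Set X) := by
      rw [hV, Submodule.topologicalClosure_coe]
      exact ((Set.countable_range w).isSeparable.span).closure
    rwa [hVtop, Submodule.top_coe] at h1
  exact isSeparable_univ_iff.mp this


set_option maxHeartbeats 1000000 in
/-- Weak sequential compactness of bounded sequences in a reflexive Banach space. -/
lemma weak_seq_compact [CompleteSpace X]
    (hrefl : Surjective (inclusionInDoubleDual ℝ X)) (v : ℕ → X) (M : ℝ)
    (hv : ∀ n, ‖v n‖ ≤ M) :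
    ∃ φ : ℕ → ℕ, StrictMono φ ∧ ∃ x : X,
      (∀ f : X →L[ℝ] ℝ, Tendsto (fun n => f (v (φ n))) atTop (𝓝 (f x))) := by
  set Y : Submodule ℝ X := (Submodule.span ℝ (Set.range v)).topologicalClosure with hYdef
  have hYc : IsClosed (Y : Set X) := Submodule.isClosed_topologicalClosure _
  haveI : CompleteSpace Y := hYc.completeSpace_coe
  haveI hYsep : SeparableSpace Y := by
    have : IsSeparable (Y : Set X) := by
      rw [hYdef, Submodule.topologicalClosure_coe]
      exact ((Set.countable_range v).isSeparable.span).closure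
    exact this.separableSpace
  have hYrefl : Surjective (inclusionInDoubleDual ℝ Y) := by
    intro L
    obtain ⟨y, hy⟩ := subspace_reflexive hrefl Y hYc L
    exact ⟨y, ContinuousLinearMap.ext fun g => by rw [dual_def]; exact hy g⟩
  haveI : SeparableSpace (Dual ℝ (Dual ℝ Y)) :=
    hYrefl.denseRange.separableSpace (inclusionInDoubleDual ℝ Y).continuous
  haveI : SeparableSpace (Dual ℝ Y) := separable_of_dual_separable
  set g : ℕ → Dual ℝ Y := denseSeq (Dual ℝ Y) with hgdef
  have hdense : DenseRange g := denseRange_denseSeq (Dual ℝ Y)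
  have hvY : ∀ n, v n ∈ Y := fun n =>
    Submodule.le_topologicalClosure _ (Submodule.subset_span ⟨n, rfl⟩)
  set y : ℕ → Y := fun n => ⟨v n, hvY n⟩ with hydef
  set M' : ℝ := max M 0 with hM'
  have hyM : ∀ n, ‖y n‖ ≤ M' := fun n => le_max_of_le_left (hv n)
  -- diagonal extraction via compactness of a product of intervals
  set C : Set (ℕ → ℝ) := Set.univ.pi fun k => Set.Icc (-(‖g k‖ * M')) (‖g k‖ * M') with hC
  have hCcomp : IsCompact C := isCompact_univ_pi fun k => isCompact_Icc
  have hmem : ∀ n, (fun k => g k (y n)) ∈ C := by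
    intro n
    intro k _
    have h1 : ‖g k (y n)‖ ≤ ‖g k‖ * M' := by
      calc ‖g k (y n)‖ ≤ ‖g k‖ * ‖y n‖ := (g k).le_opNorm _
      _ ≤ ‖g k‖ * M' := mul_le_mul_of_nonneg_left (hyM n) (norm_nonneg _)
    rw [Real.norm_eq_abs, abs_le] at h1
    exact ⟨h1.1, h1.2⟩
  obtain ⟨G, -, φ, hφ, hconv⟩ := hCcomp.tendsto_subseq hmem
  have hk : ∀ k, Tendsto (fun n => g k (y (φ n))) atTop (𝓝 (G k)) := by
    intro k
    have := (tendsto_pi_nhds.mp hconv) k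
    exact this
  -- every functional converges along the subsequence
  have hcauchy : ∀ h : Dual ℝ Y, ∃ l : ℝ, Tendsto (fun n => h (y (φ n))) atTop (𝓝 l) := by
    intro h
    apply cauchySeq_tendsto_of_complete
    rw [Metric.cauchySeq_iff]
    intro ε hε
    have hM'pos : (0:ℝ) < M' + 1 := by positivity
    obtain ⟨k, hkd⟩ := Metric.denseRange_iff.mp hdense h (ε / (3 * (M' + 1)))
      (by positivity)
    have hnear : ‖h - g k‖ < ε / (3 * (M' + 1)) := by
      rw [← dist_eq_norm]; exact hkd
    have hterm : ∀ n, |h (y (φ n)) - g k (y (φ n))| ≤ ε / 3 := by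
      intro n
      have h1 : |(h - g k) (y (φ n))| ≤ ‖h - g k‖ * ‖y (φ n)‖ := (h - g k).le_opNorm _
      have h2 : ‖h - g k‖ * ‖y (φ n)‖ ≤ (ε / (3 * (M' + 1))) * M' := by
        apply mul_le_mul hnear.le (hyM _) (norm_nonneg _) (by positivity)
      have h3 : (ε / (3 * (M' + 1))) * M' ≤ ε / 3 := by
        rw [div_mul_eq_mul_div, div_le_div_iff₀ (by positivity) (by norm_num)]
        have hM0 : 0 ≤ M' := le_max_right _ _
        nlinarith
      have h4 : (h - g k) (y (φ n)) = h (y (φ n)) - g k (y (φ n)) := rfl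
      rw [h4] at h1
      linarith
    obtain ⟨N, hN⟩ := (Metric.cauchySeq_iff.mp (hk k).cauchySeq) (ε / 3) (by positivity)
    refine ⟨N, fun m hm n hn => ?_⟩
    have hd := hN m hm n hn
    rw [Real.dist_eq] at hd ⊢
    have t1 := hterm m
    have t2 := hterm n
    have : h (y (φ m)) - h (y (φ n)) =
        (h (y (φ m)) - g k (y (φ m))) + (g k (y (φ m)) - g k (y (φ n)))
        + (g k (y (φ n)) - h (y (φ n))) := by ring
    rw [this]
    calc |(h (y (φ m)) - g k (y (φ m))) + (g k (y (φ m)) - g k (y (φ n)))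
        + (g k (y (φ n)) - h (y (φ n)))|
        ≤ |h (y (φ m)) - g k (y (φ m))| + |g k (y (φ m)) - g k (y (φ n))|
        + |g k (y (φ n)) - h (y (φ n))| := abs_add_three _ _ _
      _ < ε / 3 + ε / 3 + ε / 3 := by
          have t3 : |g k (y (φ n)) - h (y (φ n))| ≤ ε / 3 := by
            rw [abs_sub_comm]; exact hterm n
          linarith
      _ = ε := by ring
  choose l hl using hcauchy
  -- the limit functional
  have hladd : ∀ h₁ h₂ : Dual ℝ Y, l (h₁ + h₂) = l h₁ + l h₂ := by
    intro h₁ h₂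
    exact tendsto_nhds_unique (hl (h₁ + h₂)) ((hl h₁).add (hl h₂))
  have hlsmul : ∀ (c : ℝ) (h : Dual ℝ Y), l (c • h) = c * l h := by
    intro c h
    exact tendsto_nhds_unique (hl (c • h)) ((hl h).const_mul c)
  have hlbound : ∀ h : Dual ℝ Y, ‖l h‖ ≤ M' * ‖h‖ := by
    intro h
    have h1 : Tendsto (fun n => |h (y (φ n))|) atTop (𝓝 |l h|) := (hl h).abs
    rw [Real.norm_eq_abs]
    apply le_of_tendsto h1
    filter_upwards with n
    calc |h (y (φ n))| ≤ ‖h‖ * ‖y (φ n)‖ := (h).le_opNorm _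
    _ ≤ ‖h‖ * M' := mul_le_mul_of_nonneg_left (hyM _) (norm_nonneg _)
    _ = M' * ‖h‖ := mul_comm _ _
  set T : Dual ℝ Y →ₗ[ℝ] ℝ :=
    { toFun := l, map_add' := hladd, map_smul' := hlsmul } with hT
  set L : Dual ℝ (Dual ℝ Y) := T.mkContinuous M' hlbound with hL
  obtain ⟨y₀, hy₀⟩ := subspace_reflexive hrefl Y hYc L
  refine ⟨φ, hφ, (y₀ : X), fun f => ?_⟩
  have h1 : ∀ n, f (v (φ n)) = (f.comp Y.subtypeL) (y (φ n)) := fun n => rfl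
  have h2 : f (y₀ : X) = (f.comp Y.subtypeL) y₀ := rfl
  rw [h2]
  have h3 := hy₀ (f.comp Y.subtypeL)
  rw [h3]
  have h4 : L (f.comp Y.subtypeL) = l (f.comp Y.subtypeL) := rfl
  rw [h4]
  exact hl (f.comp Y.subtypeL)


/-- Bolzano–Weierstrass for bounded real sequences. -/
lemma real_bw {a : ℕ → ℝ} {C : ℝ} (h : ∀ n, |a n| ≤ C) :
    ∃ ψ : ℕ → ℕ, StrictMono ψ ∧ ∃ l : ℝ, Tendsto (a ∘ ψ) atTop (𝓝 l) := by
  obtain ⟨l, -, ψ, hψ, hconv⟩ := (isCompact_Icc (a := -C) (b := C)).tendsto_subseq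
    (fun n => Set.mem_Icc.mpr ⟨neg_le_of_abs_le (h n), le_of_abs_le (h n)⟩)
  exact ⟨ψ, hψ, l, hconv⟩

/-- Segment points between a weak limit and the sequence converge weakly to the limit. -/
lemma weak_tendsto_segment {v : ℕ → X} {x : X}
    (hx : ∀ f : X →L[ℝ] ℝ, Tendsto (fun n => f (v n)) atTop (𝓝 (f x)))
    {t : ℕ → ℝ} (ht : ∀ n, t n ∈ Set.Icc (0:ℝ) 1) :
    ∀ f : X →L[ℝ] ℝ,
      Tendsto (fun n => f (x + t n • (v n - x))) atTop (𝓝 (f x)) := by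
  intro f
  have h0 : Tendsto (fun n => f (v n) - f x) atTop (𝓝 0) := by
    simpa using (hx f).sub_const (f x)
  have h1 : Tendsto (fun n => t n * (f (v n) - f x)) atTop (𝓝 0) := by
    apply squeeze_zero_norm (a := fun n => |f (v n) - f x|) _ (by simpa using h0.abs)
    intro n
    rw [Real.norm_eq_abs, abs_mul]
    have := (ht n).1
    have h2 : |t n| ≤ 1 := abs_le.mpr ⟨by linarith, (ht n).2⟩
    calc |t n| * |f (v n) - f x| ≤ 1 * |f (v n) - f x| :=
      mul_le_mul_of_nonneg_right h2 (abs_nonneg _)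
    _ = |f (v n) - f x| := one_mul _
  have h2 : ∀ n, f (x + t n • (v n - x)) = f x + t n * (f (v n) - f x) := by
    intro n
    rw [map_add, map_smul, map_sub, smul_eq_mul]
  simp only [h2]
  simpa using tendsto_const_nhds.add h1

/-- A sequentially weakly u.s.c. continuous functional is bounded above on bounded sets. -/
lemma usc_bddAbove [CompleteSpace X] (hrefl : Surjective (inclusionInDoubleDual ℝ X))
    {Ψ : X → ℝ} (hc : Continuous Ψ)
    (husc : ∀ (u : ℕ → X) (x : X),
      (∀ f : X →L[ℝ] ℝ, Tendsto (fun n => f (u n)) atTop (𝓝 (f x))) →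
      limsup (fun n => Ψ (u n)) atTop ≤ Ψ x)
    {s : Set X} {M : ℝ} (hs : ∀ u ∈ s, ‖u‖ ≤ M) : BddAbove (Ψ '' s) := by
  by_contra hbdd
  have hex : ∀ n : ℕ, ∃ u, u ∈ s ∧ (n : ℝ) < Ψ u := by
    intro n
    rw [not_bddAbove_iff] at hbdd
    obtain ⟨b, ⟨u, hu, rfl⟩, hb⟩ := hbdd (n : ℝ)
    exact ⟨u, hu, hb⟩
  choose w hw1 hw2 using hex
  obtain ⟨φ, hφ, x, hx⟩ := weak_seq_compact hrefl w M (fun n => hs _ (hw1 n))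
  have hIVT : ∀ n : ℕ, ∃ t : ℝ, t ∈ Set.Icc (0:ℝ) 1 ∧
      (Ψ x + 1 ≤ Ψ (w (φ n)) → Ψ (x + t • (w (φ n) - x)) = Ψ x + 1) := by
    intro n
    by_cases hn : Ψ x + 1 ≤ Ψ (w (φ n))
    · have hcont : ContinuousOn (fun τ : ℝ => Ψ (x + τ • (w (φ n) - x)))
          (Set.Icc (0:ℝ) 1) := by
        apply Continuous.continuousOn
        exact hc.comp (by continuity)
      have hsub := intermediate_value_Icc (by norm_num : (0:ℝ) ≤ 1) hcont
      have hmem : Ψ x + 1 ∈ Set.Icc (Ψ (x + (0:ℝ) • (w (φ n) - x)))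
          (Ψ (x + (1:ℝ) • (w (φ n) - x))) := by
        simp only [zero_smul, add_zero, one_smul]
        rw [add_sub_cancel]
        exact ⟨by linarith, hn⟩
      obtain ⟨τ, hτ, hτeq⟩ := hsub hmem
      exact ⟨τ, hτ, fun _ => hτeq⟩
    · exact ⟨0, by norm_num, fun hh => absurd hh hn⟩
  choose t ht1 ht2 using hIVT
  set z : ℕ → X := fun n => x + t n • (w (φ n) - x) with hz
  have hzt : ∀ f : X →L[ℝ] ℝ, Tendsto (fun n => f (z n)) atTop (𝓝 (f x)) :=
    weak_tendsto_segment (fun f => hx f) ht1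
  have hev : ∀ᶠ n in atTop, Ψ (z n) = Ψ x + 1 := by
    filter_upwards [eventually_ge_atTop ⌈Ψ x + 1⌉₊] with n hn
    apply ht2
    have h1 : Ψ x + 1 ≤ (n : ℝ) := by
      calc Ψ x + 1 ≤ (⌈Ψ x + 1⌉₊ : ℝ) := Nat.le_ceil _
      _ ≤ (n : ℝ) := by exact_mod_cast hn
    calc Ψ x + 1 ≤ (n : ℝ) := h1
    _ ≤ (φ n : ℝ) := by exact_mod_cast hφ.le_apply
    _ ≤ Ψ (w (φ n)) := (hw2 (φ n)).le
  have hlim : limsup (fun n => Ψ (z n)) atTop = Ψ x + 1 := by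
    rw [limsup_congr hev]
    exact limsup_const _
  have := husc z x hzt
  rw [hlim] at this
  linarith

/-- A sequentially weakly l.s.c. continuous functional is bounded below on bounded sets. -/
lemma lsc_bddBelow [CompleteSpace X] (hrefl : Surjective (inclusionInDoubleDual ℝ X))
    {Φ : X → ℝ} (hc : Continuous Φ)
    (hlsc : ∀ (u : ℕ → X) (x : X),
      (∀ f : X →L[ℝ] ℝ, Tendsto (fun n => f (u n)) atTop (𝓝 (f x))) →
      Φ x ≤ liminf (fun n => Φ (u n)) atTop)
    {s : Set X} {M : ℝ} (hs : ∀ u ∈ s, ‖u‖ ≤ M) : BddBelow (Φ '' s) := by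
  by_contra hbdd
  have hex : ∀ n : ℕ, ∃ u, u ∈ s ∧ Φ u < -(n : ℝ) := by
    intro n
    rw [not_bddBelow_iff] at hbdd
    obtain ⟨b, ⟨u, hu, rfl⟩, hb⟩ := hbdd (-(n : ℝ))
    exact ⟨u, hu, hb⟩
  choose w hw1 hw2 using hex
  obtain ⟨φ, hφ, x, hx⟩ := weak_seq_compact hrefl w M (fun n => hs _ (hw1 n))
  have hIVT : ∀ n : ℕ, ∃ t : ℝ, t ∈ Set.Icc (0:ℝ) 1 ∧
      (Φ (w (φ n)) ≤ Φ x - 1 → Φ (x + t • (w (φ n) - x)) = Φ x - 1) := by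
    intro n
    by_cases hn : Φ (w (φ n)) ≤ Φ x - 1
    · have hcont : ContinuousOn (fun τ : ℝ => Φ (x + τ • (w (φ n) - x)))
          (Set.Icc (0:ℝ) 1) := by
        apply Continuous.continuousOn
        exact hc.comp (by continuity)
      have hsub := intermediate_value_Icc' (by norm_num : (0:ℝ) ≤ 1) hcont
      have hmem : Φ x - 1 ∈ Set.Icc (Φ (x + (1:ℝ) • (w (φ n) - x)))
          (Φ (x + (0:ℝ) • (w (φ n) - x))) := by
        simp only [zero_smul, add_zero, one_smul]
        rw [add_sub_cancel]
        exact ⟨hn, by linarith⟩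
      obtain ⟨τ, hτ, hτeq⟩ := hsub hmem
      exact ⟨τ, hτ, fun _ => hτeq⟩
    · exact ⟨0, by norm_num, fun hh => absurd hh hn⟩
  choose t ht1 ht2 using hIVT
  set z : ℕ → X := fun n => x + t n • (w (φ n) - x) with hz
  have hzt : ∀ f : X →L[ℝ] ℝ, Tendsto (fun n => f (z n)) atTop (𝓝 (f x)) :=
    weak_tendsto_segment (fun f => hx f) ht1
  have hev : ∀ᶠ n in atTop, Φ (z n) = Φ x - 1 := by
    filter_upwards [eventually_ge_atTop ⌈1 - Φ x⌉₊] with n hn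
    apply ht2
    have h1 : 1 - Φ x ≤ (n : ℝ) := by
      calc 1 - Φ x ≤ (⌈1 - Φ x⌉₊ : ℝ) := Nat.le_ceil _
      _ ≤ (n : ℝ) := by exact_mod_cast hn
    have h2 : (n : ℝ) ≤ (φ n : ℝ) := by exact_mod_cast hφ.le_apply
    have h3 := hw2 (φ n)
    linarith
  have hlim : liminf (fun n => Φ (z n)) atTop = Φ x - 1 := by
    rw [liminf_congr hev]
    exact liminf_const _
  have := hlsc z x hzt
  rw [hlim] at this
  linarith


lemma abs_le_max_of_between {x lo hi : ℝ} (h1 : lo ≤ x) (h2 : x ≤ hi) :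
    |x| ≤ max |lo| |hi| := by
  rw [abs_le]
  have h3 := neg_abs_le lo
  have h4 := le_max_left |lo| |hi|
  have h5 := le_abs_self hi
  have h6 := le_max_right |lo| |hi|
  constructor <;> linarith


end BMBAux

/-- **Bonanno–Molica Bisci nonsmooth variational principle.**
Let `X` be a reflexive real Banach space (the canonical embedding into the double dual
is surjective) and `Φ, Ψ : X → ℝ` locally Lipschitz, with `Φ` sequentially weakly lower
semicontinuous and coercive, and `Ψ` sequentially weakly upper semicontinuous.  For
`r > inf_X Φ` (i.e. `∃ u, Φ u < r`) put
`φ(r) := inf_{Φ u < r} [ (sup_{Φ v < r} Ψ v) − Ψ u ] / (r − Φ u)`.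
Then for each `λ > 0` with `λ·φ(r) < 1` (so `λ ∈ (0, 1/φ(r))`, the interval being
`(0, ∞)` when `φ(r) = 0`), the restriction of `J_λ := Φ − λΨ` to `Φ⁻¹((−∞,r))` attains a
global minimum at some `u₀`, which is a generalized critical point, indeed a local
minimum, of `J_λ` on `X`. -/
theorem stmt_5 {X : Type*} [NormedAddCommGroup X] [NormedSpace ℝ X] [CompleteSpace X]
    (hrefl : Function.Surjective (NormedSpace.inclusionInDoubleDual ℝ X))
    (Φ Ψ : X → ℝ) (hΦlip : LocallyLipschitz Φ) (hΨlip : LocallyLipschitz Ψ)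
    (hΦwlsc : ∀ (u : ℕ → X) (x : X), WeakSeqTendsto u x →
      Φ x ≤ liminf (fun n => Φ (u n)) atTop)
    (hΦcoer : ∀ M : ℝ, ∃ R : ℝ, ∀ u : X, R ≤ ‖u‖ → M ≤ Φ u)
    (hΨwusc : ∀ (u : ℕ → X) (x : X), WeakSeqTendsto u x →
      limsup (fun n => Ψ (u n)) atTop ≤ Ψ x)
    (r : ℝ) (hr : ∃ u, Φ u < r) (lam : ℝ) (hlam : 0 < lam)
    (hlam' : lam * sInf ((fun u => (sSup (Ψ '' {v | Φ v < r}) - Ψ u) / (r - Φ u)) ''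
      {u | Φ u < r}) < 1) :
    ∃ u₀ : X, Φ u₀ < r ∧
      (∀ u : X, Φ u < r → Φ u₀ - lam * Ψ u₀ ≤ Φ u - lam * Ψ u) ∧
      (∀ z : X, 0 ≤ clarkeDeriv (fun u => Φ u - lam * Ψ u) u₀ z) ∧
      (∀ᶠ u in 𝓝 u₀, Φ u₀ - lam * Ψ u₀ ≤ Φ u - lam * Ψ u) := by
  classical
  set J : X → ℝ := fun u => Φ u - lam * Ψ u with hJdef
  have hΦc : Continuous Φ := hΦlip.continuous
  have hΨc : Continuous Ψ := hΨlip.continuous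
  set D : Set X := {u | Φ u < r} with hDdef
  have hDne : D.Nonempty := hr
  obtain ⟨R, hR⟩ := hΦcoer r
  have hDb : ∀ u ∈ D, ‖u‖ ≤ max R 0 := by
    intro u hu
    by_contra h
    push_neg at h
    have h2 : R ≤ ‖u‖ := le_trans (le_max_left _ _) h.le
    exact absurd (hR u h2) (not_le.mpr hu)
  have hΨbdd : BddAbove (Ψ '' D) := usc_bddAbove hrefl hΨc hΨwusc hDb
  have hΦbdd : BddBelow (Φ '' D) := lsc_bddBelow hrefl hΦc hΦwlsc hDb
  obtain ⟨cΦ, hcΦ⟩ := hΦbdd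
  set S : ℝ := sSup (Ψ '' D) with hSdef
  have hSle : ∀ u ∈ D, Ψ u ≤ S := fun u hu => le_csSup hΨbdd ⟨u, hu, rfl⟩
  have hJlb : ∀ u ∈ D, cΦ - lam * S ≤ J u := by
    intro u hu
    have h1 : cΦ ≤ Φ u := hcΦ ⟨u, hu, rfl⟩
    have h2 := mul_le_mul_of_nonneg_left (hSle u hu) hlam.le
    simp only [hJdef]
    linarith
  have hJbdd : BddBelow (J '' D) := ⟨cΦ - lam * S, by
    rintro _ ⟨u, hu, rfl⟩; exact hJlb u hu⟩
  have hJne : (J '' D).Nonempty := hDne.image J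
  set m : ℝ := sInf (J '' D) with hmdef
  have hmle : ∀ u ∈ D, m ≤ J u := fun u hu => csInf_le hJbdd ⟨u, hu, rfl⟩
  -- a good competitor from the hypothesis on `lam`
  have hub : ∃ u ∈ D, lam * ((S - Ψ u) / (r - Φ u)) < 1 := by
    have hne2 : ((fun u => (S - Ψ u) / (r - Φ u)) '' D).Nonempty := hDne.image _
    have h1 : sInf ((fun u => (S - Ψ u) / (r - Φ u)) '' D) < 1 / lam := by
      rw [lt_div_iff₀ hlam, mul_comm]
      exact hlam'
    obtain ⟨t, ⟨u, hu, rfl⟩, hlt⟩ := exists_lt_of_csInf_lt hne2 h1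
    refine ⟨u, hu, ?_⟩
    rw [mul_comm, ← lt_div_iff₀ hlam]
    exact hlt
  obtain ⟨ub, hub1, hub2⟩ := hub
  have hrpos : (0:ℝ) < r - Φ ub := sub_pos.mpr hub1
  have hkey : J ub < r - lam * S := by
    have h2 : lam * ((S - Ψ ub) / (r - Φ ub)) * (r - Φ ub) < 1 * (r - Φ ub) :=
      mul_lt_mul_of_pos_right hub2 hrpos
    rw [← mul_div_assoc, div_mul_cancel₀ _ (ne_of_gt hrpos)] at h2
    simp only [hJdef]
    linarith
  have hmlt : m < r - lam * S := lt_of_le_of_lt (hmle ub hub1) hkey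
  -- minimizing sequence
  have hmin : ∀ n : ℕ, ∃ u ∈ D, J u < m + 1 / (n + 1) := by
    intro n
    obtain ⟨a, ⟨u, hu, rfl⟩, ha⟩ := Real.lt_sInf_add_pos hJne
      (show (0:ℝ) < 1 / (n + 1) by positivity)
    exact ⟨u, hu, ha⟩
  choose w hw1 hw2 using hmin
  obtain ⟨φ, hφ, u₀, hu₀⟩ := weak_seq_compact hrefl w (max R 0) (fun n => hDb _ (hw1 n))
  -- J values along the subsequence are still minimizing
  have hJsq : ∀ (σ : ℕ → ℕ), StrictMono σ →
      Tendsto (fun n => J (w (σ n))) atTop (𝓝 m) := by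
    intro σ hσ
    apply tendsto_of_tendsto_of_tendsto_of_le_of_le (g := fun _ => m)
      (h := fun n : ℕ => m + 1 / (n + 1))
    · exact tendsto_const_nhds
    · simpa using tendsto_const_nhds.add (tendsto_one_div_add_atTop_nhds_zero_nat (𝕜 := ℝ))
    · exact fun n => hmle _ (hw1 (σ n))
    · intro n
      have h1 := hw2 (σ n)
      have h2 : (1:ℝ) / (σ n + 1) ≤ 1 / (n + 1) := by
        apply one_div_le_one_div_of_le (by positivity)
        have : (n:ℝ) ≤ σ n := by exact_mod_cast hσ.le_apply
        linarith
      linarith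
  -- extract convergence of `Φ` values
  have hΦabs : ∀ n, |Φ (w (φ n))| ≤ max |cΦ| |r| :=
    fun n => abs_le_max_of_between (hcΦ ⟨w (φ n), hw1 (φ n), rfl⟩) (hw1 (φ n)).le
  obtain ⟨ψ₁, hψ₁, α, hα⟩ := real_bw hΦabs
  -- extract convergence of `Ψ` values
  have hΨabs : ∀ n, |Ψ (w (φ (ψ₁ n)))| ≤
      max |(-(max |cΦ| |r|) - (m + 1)) / lam| |S| := by
    intro n
    apply abs_le_max_of_between _ (hSle _ (hw1 _))
    have h1 : J (w (φ (ψ₁ n))) < m + 1 := by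
      have h0 := hw2 (φ (ψ₁ n))
      have h2 : (1:ℝ) / ((φ (ψ₁ n) : ℝ) + 1) ≤ 1 := by
        rw [div_le_one (by positivity)]
        have : (0:ℝ) ≤ (φ (ψ₁ n) : ℝ) := Nat.cast_nonneg _
        linarith
      refine lt_of_lt_of_le h0 ?_
      linarith
    have h3 : -(max |cΦ| |r|) ≤ Φ (w (φ (ψ₁ n))) := neg_le_of_abs_le (hΦabs (ψ₁ n))
    simp only [hJdef] at h1
    rw [div_le_iff₀ hlam]
    nlinarith
  obtain ⟨ψ₂, hψ₂, β, hβ⟩ := real_bw hΨabs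
  -- the combined subsequence
  set σ : ℕ → ℕ := fun n => φ (ψ₁ (ψ₂ n)) with hσdef
  have hσmono : StrictMono (ψ₁ ∘ ψ₂) := hψ₁.comp hψ₂
  set z : ℕ → X := fun n => w (σ n) with hzdef
  have hzD : ∀ n, z n ∈ D := fun n => hw1 _
  have hzweak : ∀ f : X →L[ℝ] ℝ, Tendsto (fun n => f (z n)) atTop (𝓝 (f u₀)) := by
    intro f
    exact (hu₀ f).comp (hσmono.tendsto_atTop)
  have hzΦ : Tendsto (fun n => Φ (z n)) atTop (𝓝 α) := by
    have := hα.comp hψ₂.tendsto_atTop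
    exact this
  have hzΨ : Tendsto (fun n => Ψ (z n)) atTop (𝓝 β) := hβ
  have hzJ : Tendsto (fun n => J (z n)) atTop (𝓝 m) := hJsq _ (hφ.comp hσmono)
  have hzJ' : Tendsto (fun n => J (z n)) atTop (𝓝 (α - lam * β)) := by
    have : (fun n => J (z n)) = fun n => Φ (z n) - lam * Ψ (z n) := rfl
    rw [this]
    exact hzΦ.sub (hzΨ.const_mul lam)
  have hm_eq : m = α - lam * β := tendsto_nhds_unique hzJ hzJ'
  have hβS : β ≤ S := le_of_tendsto hzΨ (Eventually.of_forall fun n => hSle _ (hzD n))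
  have hαr : α ≤ r := le_of_tendsto hzΦ (Eventually.of_forall fun n => (hzD n).le)
  have hαlt : α < r := by
    rcases lt_or_eq_of_le hαr with h | h
    · exact h
    · exfalso
      have h1 : r - lam * S ≤ r - lam * β := by
        have := mul_le_mul_of_nonneg_left hβS hlam.le
        linarith
      rw [hm_eq, h] at hmlt
      linarith [mul_le_mul_of_nonneg_left hβS hlam.le]
  -- conclusion
  have hΦu₀ : Φ u₀ < r := by
    have h1 := hΦwlsc z u₀ hzweak
    rw [hzΦ.liminf_eq] at h1
    linarith
  have hΨu₀ : β ≤ Ψ u₀ := by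
    have h1 := hΨwusc z u₀ hzweak
    rw [hzΨ.limsup_eq] at h1
    linarith
  have hJu₀ : J u₀ ≤ m := by
    rw [hm_eq]
    simp only [hJdef]
    have := mul_le_mul_of_nonneg_left hΨu₀ hlam.le
    have h2 := hΦwlsc z u₀ hzweak
    rw [hzΦ.liminf_eq] at h2
    linarith
  have hDopen : IsOpen D := isOpen_lt hΦc continuous_const
  have hloc : ∀ᶠ u in 𝓝 u₀, J u₀ ≤ J u := by
    filter_upwards [hDopen.mem_nhds hΦu₀] with u hu
    exact le_trans hJu₀ (hmle u hu)
  refine ⟨u₀, hΦu₀, fun u hu => le_trans hJu₀ (hmle u hu), ?_, hloc⟩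
  -- the Clarke derivative is nonnegative
  intro zz
  obtain ⟨K₁, t₁, ht₁, hK₁⟩ := hΦlip u₀
  obtain ⟨K₂, t₂, ht₂, hK₂⟩ := hΨlip u₀
  have hN : {u | J u₀ ≤ J u} ∈ 𝓝 u₀ := hloc
  have hmem : t₁ ∩ t₂ ∩ {u | J u₀ ≤ J u} ∈ 𝓝 u₀ := inter_mem (inter_mem ht₁ ht₂) hN
  obtain ⟨ε, hε, hball⟩ := Metric.mem_nhds_iff.mp hmem
  set K : ℝ := (K₁ : ℝ) + lam * (K₂ : ℝ) with hKdef
  have hJlipball : ∀ a ∈ Metric.ball u₀ ε, ∀ b ∈ Metric.ball u₀ ε,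
      |J a - J b| ≤ K * ‖a - b‖ := by
    intro a ha b hb
    have h₁ := hK₁.dist_le_mul a (hball ha).1.1 b (hball hb).1.1
    have h₂ := hK₂.dist_le_mul a (hball ha).1.2 b (hball hb).1.2
    rw [Real.dist_eq, dist_eq_norm] at h₁ h₂
    have he : J a - J b = (Φ a - Φ b) - lam * (Ψ a - Ψ b) := by
      simp only [hJdef]; ring
    rw [he]
    have h3 := abs_sub (Φ a - Φ b) (lam * (Ψ a - Ψ b))
    rw [abs_mul, abs_of_pos hlam] at h3
    have h4 := mul_le_mul_of_nonneg_left h₂ hlam.le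
    rw [hKdef]
    linarith
  set g : X × ℝ → ℝ := fun p => (J (p.1 + p.2 • zz) - J p.1) / p.2 with hgdef
  set F := (𝓝 u₀) ×ˢ (𝓝[>] (0:ℝ)) with hFdef
  have hzpos : (0:ℝ) < ε / (2 * (‖zz‖ + 1)) := by positivity
  have hzkey : (ε / (2 * (‖zz‖ + 1))) * ‖zz‖ ≤ ε / 2 := by
    rw [div_mul_eq_mul_div, div_le_div_iff₀ (by positivity) (by norm_num)]
    have h0 : (0:ℝ) ≤ ‖zz‖ := norm_nonneg _
    nlinarith
  have hbound : ∀ᶠ p in F, g p ≤ K * ‖zz‖ := by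
    have hball2 : Metric.ball u₀ (ε/2) ∈ 𝓝 u₀ := Metric.ball_mem_nhds _ (by positivity)
    have hIoo : Set.Ioo (0:ℝ) (ε/(2*(‖zz‖+1))) ∈ 𝓝[>] (0:ℝ) :=
      Ioo_mem_nhdsGT_of_mem ⟨le_refl 0, hzpos⟩
    rw [hFdef]
    filter_upwards [prod_mem_prod hball2 hIoo] with p hp
    have hp1 : p.1 ∈ Metric.ball u₀ (ε/2) := hp.1
    have hp2 : 0 < p.2 := hp.2.1
    have hp3 : p.2 < ε/(2*(‖zz‖+1)) := hp.2.2
    have hmem1 : p.1 ∈ Metric.ball u₀ ε := by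
      rw [Metric.mem_ball] at hp1 ⊢
      linarith
    have hmem2 : p.1 + p.2 • zz ∈ Metric.ball u₀ ε := by
      rw [Metric.mem_ball, dist_eq_norm]
      have ht : ‖p.1 + p.2 • zz - u₀‖ ≤ ‖p.1 - u₀‖ + ‖p.2 • zz‖ := by
        have : p.1 + p.2 • zz - u₀ = (p.1 - u₀) + p.2 • zz := by abel
        rw [this]
        exact norm_add_le _ _
      have hsm : ‖p.2 • zz‖ ≤ ε / 2 := by
        rw [norm_smul, Real.norm_eq_abs, abs_of_pos hp2]
        calc p.2 * ‖zz‖ ≤ (ε/(2*(‖zz‖+1))) * ‖zz‖ :=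
          mul_le_mul_of_nonneg_right hp3.le (norm_nonneg _)
        _ ≤ ε / 2 := hzkey
      rw [Metric.mem_ball, dist_eq_norm] at hp1
      linarith
    have hlip := hJlipball _ hmem2 _ hmem1
    rw [add_sub_cancel_left, norm_smul, Real.norm_eq_abs, abs_of_pos hp2] at hlip
    have hnum : J (p.1 + p.2 • zz) - J p.1 ≤ K * (p.2 * ‖zz‖) :=
      le_trans (le_abs_self _) hlip
    have hgp : g p = (J (p.1 + p.2 • zz) - J p.1) / p.2 := rfl
    rw [hgp, div_le_iff₀ hp2]
    calc J (p.1 + p.2 • zz) - J p.1 ≤ K * (p.2 * ‖zz‖) := hnum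
    _ = K * ‖zz‖ * p.2 := by ring
  have hbdd : Filter.IsBoundedUnder (· ≤ ·) F g :=
    Filter.isBoundedUnder_of_eventually_le hbound
  have hfreq : ∃ᶠ p in F, 0 ≤ g p := by
    rw [Filter.frequently_iff]
    intro U hU
    rw [hFdef, Filter.mem_prod_iff] at hU
    obtain ⟨A, hA, B, hB, hAB⟩ := hU
    obtain ⟨η, hη, hIoo⟩ := mem_nhdsGT_iff_exists_Ioo_subset.mp hB
    rw [Set.mem_Ioi] at hη
    set τ : ℝ := min (η/2) (ε/(2*(‖zz‖+1))) with hτdef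
    have hτpos : 0 < τ := lt_min (by linarith) hzpos
    have hτη : τ < η := lt_of_le_of_lt (min_le_left _ _) (by linarith)
    refine ⟨(u₀, τ), hAB ⟨mem_of_mem_nhds hA, hIoo ⟨hτpos, hτη⟩⟩, ?_⟩
    have hgp : g (u₀, τ) = (J (u₀ + τ • zz) - J u₀) / τ := rfl
    rw [hgp]
    apply div_nonneg _ hτpos.le
    rw [sub_nonneg]
    have hmemN : u₀ + τ • zz ∈ t₁ ∩ t₂ ∩ {u | J u₀ ≤ J u} := by
      apply hball
      rw [Metric.mem_ball, dist_eq_norm, add_sub_cancel_left, norm_smul,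
        Real.norm_eq_abs, abs_of_pos hτpos]
      calc τ * ‖zz‖ ≤ (ε/(2*(‖zz‖+1))) * ‖zz‖ :=
        mul_le_mul_of_nonneg_right (min_le_right _ _) (norm_nonneg _)
      _ ≤ ε / 2 := hzkey
      _ < ε := by linarith
    exact hmemN.2
  exact le_limsup_of_frequently_le hfreq hbdd
end

section
/- (Nonsmooth principle of symmetric criticality of Krawcewicz–Marzantowicz, Banach space version.) Let X be a real Banach space, let G be a compact topological group acting continuously on X such that the action of each g ∈ G is a linear isometry of X, and let J : X → ℝ be locally Lipschitz and G-invariant (J(g·y) = J(y) for all g ∈ G, y ∈ X). Let Fix_G(X) := {y ∈ X : g·y = y for all g ∈ G}, a closed linear subspace of X, and let 𝒥 denote the restriction of J to the Banach space Fix_G(X). If u ∈ Fix_G(X) is a generalized critical point of 𝒥 (i.e. 𝒥⁰(u;v) ≥ 0 for every v ∈ Fix_G(X), the Clarke directional derivative being computed in Fix_G(X)), then u is a generalized critical point of J in X (i.e. J⁰(u;z) ≥ 0 for every z ∈ X). -/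
open Filter Topology

/-- The generalized (Clarke) directional derivative of the restriction of `J` to a set
`s` (the base point varies inside `s`); for a closed linear subspace `s` and `y, z ∈ s`
this is the Clarke derivative computed in the Banach space `s`. -/
noncomputable def clarkeDerivOn {X : Type*} [NormedAddCommGroup X] [NormedSpace ℝ X]
    (J : X → ℝ) (s : Set X) (y z : X) : ℝ :=
  Filter.limsup (fun p : X × ℝ => (J (p.1 + p.2 • z) - J p.1) / p.2)
    ((𝓝[s] y) ×ˢ (𝓝[>] (0 : ℝ)))

lemma aux_limsup_map {α β : Type*} (u : β → ℝ) (m : α → β) (f : Filter α) :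
    Filter.limsup u (Filter.map m f) = Filter.limsup (u ∘ m) f := by
  simp only [Filter.limsup, Filter.map_map]

/-- **Nonsmooth principle of symmetric criticality (Krawcewicz–Marzantowicz), Banach
space version.**  Let `G` be a compact topological group acting continuously on a real
Banach space `X` by linear isometries, and let `J : X → ℝ` be locally Lipschitz and
`G`-invariant.  If `u` lies in the fixed-point subspace `Fix_G(X)` and is a generalized
critical point of the restriction of `J` to `Fix_G(X)`, then `u` is a generalized
critical point of `J` on `X`. -/
theorem stmt_6 {X : Type*} [NormedAddCommGroup X] [NormedSpace ℝ X] [CompleteSpace X]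
    (G : Type*) [Group G] [TopologicalSpace G] [IsTopologicalGroup G] [CompactSpace G]
    [MulAction G X] [ContinuousSMul G X]
    (hlin : ∀ g : G, IsLinearMap ℝ (fun y : X => g • y))
    (hiso : ∀ (g : G) (y : X), ‖g • y‖ = ‖y‖)
    (J : X → ℝ) (hJ : LocallyLipschitz J)
    (hinv : ∀ (g : G) (y : X), J (g • y) = J y)
    (u : X) (hu : u ∈ {y : X | ∀ g : G, g • y = y})
    (hcrit : ∀ v ∈ {y : X | ∀ g : G, g • y = y},
      0 ≤ clarkeDerivOn J {y : X | ∀ g : G, g • y = y} u v) :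
    ∀ z : X, 0 ≤ clarkeDeriv J u z := by
  classical
  intro z
  set s : Set X := {y : X | ∀ g : G, g • y = y} with hs_def
  set L : Filter (X × ℝ) := (𝓝 u) ×ˢ (𝓝[>] (0 : ℝ)) with hL_def
  haveI : L.NeBot := by rw [hL_def]; infer_instance
  set q : X → X × ℝ → ℝ := fun w p => (J (p.1 + p.2 • w) - J p.1) / p.2 with hq_def
  set φ : X → ℝ := fun w => Filter.limsup (q w) L with hφ_def
  have hCD : ∀ w, clarkeDeriv J u w = φ w := fun w => rfl
  -- Lipschitz data
  obtain ⟨K, t, ht, hK⟩ := hJ u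
  obtain ⟨ε, hε, hball⟩ := Metric.mem_nhds_iff.mp ht
  have hmem : ∀ w : X, ∀ᶠ p in L, p.1 + p.2 • w ∈ Metric.ball u ε ∧ 0 < p.2 := by
    intro w
    have h1 : ∀ᶠ x in 𝓝 u, x ∈ Metric.ball u (ε/2) := Metric.ball_mem_nhds u (by linarith)
    have h2 : ∀ᶠ r in 𝓝[>] (0:ℝ), r ∈ Set.Ioo 0 ((ε/2)/(‖w‖+1)) :=
      Ioo_mem_nhdsGT_of_mem ⟨le_refl _, by positivity⟩
    filter_upwards [h1.prod_inl (𝓝[>] (0:ℝ)), h2.prod_inr (𝓝 u)] with p hp1 hp2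
    refine ⟨?_, hp2.1⟩
    have hw : ‖p.2 • w‖ < ε/2 := by
      rw [norm_smul, Real.norm_eq_abs, abs_of_pos hp2.1]
      calc p.2 * ‖w‖ ≤ p.2 * (‖w‖ + 1) := by nlinarith [hp2.1]
        _ < ε/2 := by
            rw [← lt_div_iff₀ (by positivity)]
            exact hp2.2
    have hpu := mem_ball_iff_norm.mp hp1
    rw [mem_ball_iff_norm]
    calc ‖p.1 + p.2 • w - u‖ = ‖(p.1 - u) + p.2 • w‖ := by congr 1; abel
      _ ≤ ‖p.1 - u‖ + ‖p.2 • w‖ := norm_add_le _ _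
      _ < ε/2 + ε/2 := add_lt_add hpu hw
      _ = ε := by ring
  have hdiff : ∀ z1 z2 : X, ∀ᶠ p in L, |q z1 p - q z2 p| ≤ (K : ℝ) * ‖z1 - z2‖ := by
    intro z1 z2
    filter_upwards [hmem z1, hmem z2] with p h1 h2
    have key : q z1 p - q z2 p = (J (p.1 + p.2 • z1) - J (p.1 + p.2 • z2)) / p.2 := by
      rw [hq_def]; rw [div_sub_div_same]; congr 1; ring
    rw [key, abs_div, abs_of_pos h1.2, div_le_iff₀ h1.2]
    have hd := hK.dist_le_mul _ (hball h1.1) _ (hball h2.1)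
    rw [Real.dist_eq] at hd
    refine hd.trans ?_
    rw [dist_eq_norm]
    have he : p.1 + p.2 • z1 - (p.1 + p.2 • z2) = p.2 • (z1 - z2) := by
      rw [smul_sub]; abel
    rw [he, norm_smul, Real.norm_eq_abs, abs_of_pos h1.2]
    ring_nf; exact le_refl _
  have hq0 : ∀ p : X × ℝ, q (0 : X) p = 0 := by
    intro p; rw [hq_def]; simp
  have hbd : ∀ w : X, ∀ᶠ p in L, |q w p| ≤ (K : ℝ) * ‖w‖ := by
    intro w
    filter_upwards [hdiff w 0] with p hp
    rw [hq0 p, sub_zero] at hp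
    rwa [sub_zero] at hp
  -- boundedness bundle
  have hBu : ∀ w, IsBoundedUnder (· ≤ ·) L (q w) := fun w =>
    isBoundedUnder_of_eventually_le ((hbd w).mono fun p h => (abs_le.mp h).2)
  have hBl : ∀ w, IsBoundedUnder (· ≥ ·) L (q w) := fun w =>
    isBoundedUnder_of_eventually_ge ((hbd w).mono fun p h => (abs_le.mp h).1)
  have hCu : ∀ w, IsCoboundedUnder (· ≤ ·) L (q w) := fun w => (hBl w).isCoboundedUnder_le
  have hCl : ∀ w, IsCoboundedUnder (· ≥ ·) L (q w) := fun w => (hBu w).isCoboundedUnder_ge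
  -- φ 0 = 0
  have hφ0 : φ 0 = 0 := by
    rw [hφ_def]
    simp only [funext hq0]
    exact limsup_const 0
  -- invariance of φ
  have hinvφ : ∀ (g : G) (w : X), φ (g • w) = φ w := by
    intro g w
    have hqe : ∀ p : X × ℝ, q (g • w) p = q w (g⁻¹ • p.1, p.2) := by
      intro p
      have h1 : g⁻¹ • p.1 + p.2 • w = g⁻¹ • (p.1 + p.2 • (g • w)) := by
        rw [(hlin g⁻¹).map_add, (hlin g⁻¹).map_smul, inv_smul_smul]
      rw [hq_def]
      simp only
      rw [h1, hinv g⁻¹, hinv g⁻¹ p.1]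
    have hmg : ∀ g0 : G, Tendsto (fun p : X × ℝ => ((g0 • p.1 : X), p.2)) L L := by
      intro g0
      rw [hL_def]
      refine Tendsto.prodMk ?_ tendsto_snd
      have h1 : Tendsto (fun x : X => (g0 • x : X)) (𝓝 u) (𝓝 (g0 • u)) :=
        (continuous_const_smul g0).tendsto u
      rw [show (g0 • u : X) = u from hu g0] at h1
      exact h1.comp tendsto_fst
    set e : X × ℝ → X × ℝ := fun p => ((g⁻¹ • p.1 : X), p.2) with he_def
    have hmapL : Filter.map e L = L := by
      apply le_antisymm (hmg g⁻¹)
      calc L = Filter.map (e ∘ fun p : X × ℝ => ((g • p.1 : X), p.2)) L := by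
            have hid : (e ∘ fun p : X × ℝ => ((g • p.1 : X), p.2)) = id := by
              funext p; simp [he_def]
            rw [hid, Filter.map_id]
        _ = Filter.map e (Filter.map (fun p : X × ℝ => ((g • p.1 : X), p.2)) L) :=
            (Filter.map_map).symm
        _ ≤ Filter.map e L := Filter.map_mono (hmg g)
    calc φ (g • w) = Filter.limsup (fun p : X × ℝ => q w (g⁻¹ • p.1, p.2)) L := by
          rw [hφ_def]; exact limsup_congr (Eventually.of_forall hqe)
      _ = Filter.limsup ((q w) ∘ e) L := rfl
      _ = Filter.limsup (q w) (Filter.map e L) := (aux_limsup_map _ _ _).symm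
      _ = φ w := by rw [hmapL, hφ_def]
  -- subadditivity
  have hsub : ∀ w w' : X, φ (w + w') ≤ φ w + φ w' := by
    intro w w'
    set m : X × ℝ → X × ℝ := fun p => (p.1 + p.2 • w', p.2) with hm_def
    have hmt : Tendsto m L L := by
      rw [hL_def]
      refine Tendsto.prodMk ?_ tendsto_snd
      have h2 : Tendsto (fun p : X × ℝ => p.2 • w') ((𝓝 u) ×ˢ (𝓝[>] (0:ℝ))) (𝓝 ((0:ℝ) • w')) :=
        (tendsto_snd.mono_right nhdsWithin_le_nhds).smul_const w'
      have := tendsto_fst.add h2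
      simpa using this
    have hmap_le : Filter.map m L ≤ L := hmt
    haveI : (Filter.map m L).NeBot := Filter.NeBot.map inferInstance m
    have hbdm : ∀ᶠ p in L, |q w (m p)| ≤ (K : ℝ) * ‖w‖ := hmt.eventually (hbd w)
    have heq : ∀ p, q (w + w') p = q w (m p) + q w' p := by
      intro p
      have hx : p.1 + p.2 • (w + w') = p.1 + p.2 • w' + p.2 • w := by
        rw [smul_add]; abel
      rw [hq_def, hm_def]
      simp only
      rw [hx, ← add_div]
      congr 1; ring
    have step1 : Filter.limsup (fun p => q w (m p) + q w' p) L
        ≤ Filter.limsup (fun p => q w (m p)) L + Filter.limsup (q w') L := by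
      have h1 : IsBoundedUnder (· ≥ ·) L (fun p => q w (m p)) :=
        isBoundedUnder_of_eventually_ge (hbdm.mono fun p h => (abs_le.mp h).1)
      have h2 : IsBoundedUnder (· ≤ ·) L (fun p => q w (m p)) :=
        isBoundedUnder_of_eventually_le (hbdm.mono fun p h => (abs_le.mp h).2)
      have := limsup_add_le (f := L) (u := fun p => q w (m p)) (v := q w') h1 h2 (hCu w') (hBu w')
      exact this
    have step2 : Filter.limsup (fun p => q w (m p)) L ≤ Filter.limsup (q w) L := by
      have hcb : (Filter.map m L).IsCoboundedUnder (· ≤ ·) (q w) := by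
        apply IsBoundedUnder.isCoboundedUnder_le
        apply isBoundedUnder_of_eventually_ge (a := -((K : ℝ) * ‖w‖))
        rw [eventually_map]
        exact hbdm.mono fun p h => (abs_le.mp h).1
      have := limsup_le_limsup_of_le hmap_le hcb (hBu w)
      rwa [aux_limsup_map (q w) m L] at this
    calc φ (w + w') = Filter.limsup (fun p => q w (m p) + q w' p) L := by
          rw [hφ_def]; exact limsup_congr (Eventually.of_forall heq)
      _ ≤ Filter.limsup (fun p => q w (m p)) L + Filter.limsup (q w') L := step1
      _ ≤ Filter.limsup (q w) L + Filter.limsup (q w') L := by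
          exact add_le_add_left step2 _
      _ = φ w + φ w' := rfl
  -- positive homogeneity
  have hmc : ∀ c : ℝ, 0 < c → Tendsto (fun p : X × ℝ => (p.1, c * p.2)) L L := by
    intro c hc
    rw [hL_def]
    refine Tendsto.prodMk tendsto_fst ?_
    have h1 : Tendsto (fun r : ℝ => c * r) (𝓝[>] (0:ℝ)) (𝓝[>] (0:ℝ)) := by
      apply tendsto_nhdsWithin_of_tendsto_nhds_of_eventually_within
      · have := ((continuous_mul_left c).tendsto (0:ℝ)).mono_left (nhdsWithin_le_nhds (s := Set.Ioi (0:ℝ)))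
        simpa using this
      · filter_upwards [self_mem_nhdsWithin] with r hr
        exact mul_pos hc hr
    exact h1.comp tendsto_snd
  have hhom : ∀ c : ℝ, 0 < c → ∀ w : X, φ (c • w) = c * φ w := by
    intro c hc w
    set mc : X × ℝ → X × ℝ := fun p => (p.1, c * p.2) with hmc_def
    have hmapeq : Filter.map mc L = L := by
      apply le_antisymm (hmc c hc)
      have h2 := hmc c⁻¹ (by positivity)
      calc L = Filter.map (mc ∘ (fun p : X × ℝ => (p.1, c⁻¹ * p.2))) L := by
            have : (mc ∘ (fun p : X × ℝ => (p.1, c⁻¹ * p.2))) = id := by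
              funext p
              simp [hmc_def, mul_inv_cancel_left₀ hc.ne']
            rw [this, Filter.map_id]
        _ = Filter.map mc (Filter.map (fun p : X × ℝ => (p.1, c⁻¹ * p.2)) L) :=
            (Filter.map_map).symm
        _ ≤ Filter.map mc L := Filter.map_mono h2
    have hbdm : ∀ᶠ p in L, |q w (mc p)| ≤ (K : ℝ) * ‖w‖ := (hmc c hc).eventually (hbd w)
    have heq : ∀ p, q (c • w) p = c * q w (mc p) := by
      intro p
      rw [hq_def, hmc_def]
      simp only
      rw [← mul_div_assoc, mul_div_mul_left _ _ hc.ne']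
      congr 3
      rw [smul_smul, mul_comm]
    have hmono : Monotone (fun x : ℝ => c * x) := fun a b hab =>
      mul_le_mul_of_nonneg_left hab hc.le
    have h2 : IsBoundedUnder (· ≤ ·) L (fun p => q w (mc p)) :=
      isBoundedUnder_of_eventually_le (hbdm.mono fun p h => (abs_le.mp h).2)
    have h3 : IsCoboundedUnder (· ≤ ·) L (fun p => q w (mc p)) :=
      (isBoundedUnder_of_eventually_ge (hbdm.mono fun p h => (abs_le.mp h).1)).isCoboundedUnder_le
    have hmain := hmono.map_limsup_of_continuousAt (F := L) (fun p => q w (mc p))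
      ((continuous_mul_left c).continuousAt) h2 h3
    have hqmc : Filter.limsup (fun p => q w (mc p)) L = φ w := by
      have : Filter.limsup ((q w) ∘ mc) L = Filter.limsup (q w) (Filter.map mc L) :=
        (aux_limsup_map _ _ _).symm
      rw [hφ_def]
      calc Filter.limsup (fun p => q w (mc p)) L = Filter.limsup (q w) (Filter.map mc L) := this
        _ = Filter.limsup (q w) L := by rw [hmapeq]
    calc φ (c • w) = Filter.limsup (fun p => c * q w (mc p)) L := by
          rw [hφ_def]; exact limsup_congr (Eventually.of_forall heq)
      _ = c * Filter.limsup (fun p => q w (mc p)) L := hmain.symm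
      _ = c * φ w := by rw [hqmc]
  -- Lipschitz property of φ
  have hlipφ : ∀ w w' : X, φ w ≤ φ w' + (K : ℝ) * ‖w - w'‖ := by
    intro w w'
    have hev : ∀ᶠ p in L, q w p ≤ q w' p + (K : ℝ) * ‖w - w'‖ := by
      filter_upwards [hdiff w w'] with p hp
      have := (abs_le.mp hp).2
      linarith
    have h1 : Filter.limsup (q w) L ≤ Filter.limsup (fun p => q w' p + (K : ℝ) * ‖w - w'‖) L := by
      refine limsup_le_limsup hev (hCu w) ?_
      exact isBoundedUnder_of_eventually_le (((hbd w').mono fun p h => (abs_le.mp h).2).mono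
        fun p h => add_le_add_left h _)
    have h2 : Filter.limsup (fun p => q w' p + (K : ℝ) * ‖w - w'‖) L
        = Filter.limsup (q w') L + (K : ℝ) * ‖w - w'‖ :=
      limsup_add_const L (q w') _ (hBu w') (hCu w')
    rw [hφ_def]
    calc Filter.limsup (q w) L ≤ Filter.limsup (q w') L + (K : ℝ) * ‖w - w'‖ := h2 ▸ h1
      _ = _ := rfl
  have hφcont : Continuous φ := by
    have : LipschitzWith K φ := by
      apply LipschitzWith.of_dist_le_mul
      intro x y
      rw [Real.dist_eq, dist_eq_norm, abs_sub_le_iff]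
      constructor
      · have := hlipφ x y; linarith
      · have := hlipφ y x; rw [norm_sub_rev] at this; linarith
    exact this.continuous
  -- convexity
  have hconv : ConvexOn ℝ Set.univ φ := by
    refine ⟨convex_univ, fun x _ y _ a b ha hb hab => ?_⟩
    rcases ha.eq_or_lt with rfl | ha'
    · have hb1 : b = 1 := by linarith
      subst hb1; simp [hφ0]
    rcases hb.eq_or_lt with rfl | hb'
    · have ha1 : a = 1 := by linarith
      subst ha1; simp [hφ0]
    calc φ (a • x + b • y) ≤ φ (a • x) + φ (b • y) := hsub _ _
      _ = a * φ x + b * φ y := by rw [hhom a ha' x, hhom b hb' y]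
  -- Haar measure averaging
  borelize G
  borelize X
  set μ : MeasureTheory.Measure G := MeasureTheory.Measure.haar with hμ_def
  haveI : MeasureTheory.IsFiniteMeasure μ := inferInstance
  haveI : NeZero μ := inferInstance
  set f : G → X := fun g => g • z with hf_def
  have hfc : Continuous f := continuous_id.smul continuous_const
  have hfsm : MeasureTheory.StronglyMeasurable f := by
    rw [stronglyMeasurable_iff_measurable_separable]
    exact ⟨hfc.measurable, (isCompact_range hfc).isSeparable⟩
  have hfi : MeasureTheory.Integrable f μ := by
    refine MeasureTheory.Integrable.mono' (MeasureTheory.integrable_const ‖z‖)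
      hfsm.aestronglyMeasurable ?_
    refine MeasureTheory.ae_of_all _ fun g => ?_
    rw [hf_def]
    simp only
    rw [hiso g z]
  set A : X := ⨍ g, f g ∂μ with hA_def
  -- A is fixed by the action
  have hAs : A ∈ s := by
    show ∀ g0 : G, g0 • A = A
    intro g0
    set Lg : X →L[ℝ] X := LinearMap.mkContinuous (IsLinearMap.mk' _ (hlin g0)) 1
      (fun y => by show ‖g0 • y‖ ≤ 1 * ‖y‖; rw [hiso g0 y, one_mul]) with hLg_def
    have hLg_apply : ∀ y : X, Lg y = g0 • y := fun y => rfl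
    have h1 : Lg (∫ g, f g ∂μ) = ∫ g, Lg (f g) ∂μ :=
      (ContinuousLinearMap.integral_comp_comm Lg hfi).symm
    have h2 : (fun g : G => Lg (f g)) = fun g : G => f (g0 * g) := by
      funext g
      rw [hLg_apply, hf_def]
      simp only
      rw [mul_smul]
    have h3 : ∫ g, f (g0 * g) ∂μ = ∫ g, f g ∂μ := MeasureTheory.integral_mul_left_eq_self f g0
    have h4 : g0 • (∫ g, f g ∂μ) = ∫ g, f g ∂μ := by
      rw [← hLg_apply, h1, h2, h3]
    have h5 : g0 • A = (μ Set.univ).toReal⁻¹ • (g0 • ∫ g, f g ∂μ) := by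
      rw [hA_def, MeasureTheory.average_eq]
      exact (hlin g0).map_smul _ _
    rw [h5, h4, hA_def, MeasureTheory.average_eq]
    rfl
  -- Jensen's inequality
  have hφf : (fun g : G => φ (f g)) = fun _ : G => φ z := by
    funext g
    rw [hf_def]
    exact hinvφ g z
  have hgi : MeasureTheory.Integrable (φ ∘ f) μ := by
    have hc' : (φ ∘ f) = fun _ : G => φ z := hφf
    rw [hc']
    exact MeasureTheory.integrable_const _
  have hjensen : φ A ≤ φ z := by
    have h := hconv.map_average_le hφcont.continuousOn isClosed_univ
      (MeasureTheory.ae_of_all _ fun g => Set.mem_univ (f g)) hfi hgi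
    rw [hA_def]
    refine h.trans ?_
    rw [show (⨍ g, φ (f g) ∂μ) = ⨍ _g, φ z ∂μ by rw [hφf]]
    rw [MeasureTheory.average_const]
  -- compare clarkeDerivOn with clarkeDeriv
  have hA0 := hcrit A hAs
  set L' : Filter (X × ℝ) := (𝓝[s] u) ×ˢ (𝓝[>] (0 : ℝ)) with hL'_def
  haveI hne1 : (𝓝[s] u).NeBot := mem_closure_iff_nhdsWithin_neBot.mp (subset_closure hu)
  haveI : L'.NeBot := by rw [hL'_def]; infer_instance
  have hle : L' ≤ L := by
    rw [hL'_def, hL_def]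
    exact Filter.prod_mono nhdsWithin_le_nhds le_rfl
  have hcomp : clarkeDerivOn J s u A ≤ clarkeDeriv J u A := by
    have hcb : L'.IsCoboundedUnder (· ≤ ·) (q A) := by
      apply IsBoundedUnder.isCoboundedUnder_le
      exact isBoundedUnder_of_eventually_ge (((hbd A).filter_mono hle).mono
        fun p h => (abs_le.mp h).1)
    exact limsup_le_limsup_of_le hle hcb (hBu A)
  have hchain : (0:ℝ) ≤ φ A := le_trans hA0 (hcomp.trans_eq (hCD A))
  rw [hCD z]
  linarith
end

section
/- Let d = 6 or d ≥ 8, set τ_d := (−1)^d + ⌊(d−3)/2⌋ and J_d := {1, …, τ_d}. For i ∈ J_d, identify ℝ^d with ℝ^{i+1} × ℝ^{d−2i−2} × ℝ^{i+1} if i ≠ (d−2)/2 and with ℝ^{d/2} × ℝ^{d/2} if i = (d−2)/2; let H_{d,i} be the subgroup O(i+1) × O(d−2i−2) × O(i+1) of O(d) (resp. O(d/2) × O(d/2)) acting blockwise, and let η_i be the block-swap involution η_i(x₁,x₂,x₃) := (x₃,x₂,x₁) (resp. η_i(x₁,x₃) := (x₃,x₁)). Say that u ∈ L²(ℝ^d)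 is H_{d,η_i}-invariant if u(g x) = u(x) a.e. for every g ∈ H_{d,i} and u(η_i x) = −u(x) a.e. If i, j ∈ J_d with i ≠ j and u ∈ L²(ℝ^d) is both H_{d,η_i}-invariant and H_{d,η_j}-invariant, then u = 0 almost everywhere. -/
open Filter Topology MeasureTheory

/-- The index permutation of `Fin d` swapping the first block `{0,…,i}` with the last
block `{d−1−i,…,d−1}` and fixing the middle block.  (Under the standing assumption
`2(i+1) ≤ d` the `% d` is never active and this is precisely the block swap
`(x₁,x₂,x₃) ↦ (x₃,x₂,x₁)`.) -/
def swapIdx (d i : ℕ) (j : Fin d) : Fin d :=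
  ⟨(if (j : ℕ) ≤ i then (j : ℕ) + (d - 1 - i)
    else if d - 1 - i ≤ (j : ℕ) then (j : ℕ) - (d - 1 - i)
    else (j : ℕ)) % d, Nat.mod_lt _ j.pos⟩

/-- The block-swap involution `η_i : ℝ^d → ℝ^d`, `η_i(x₁,x₂,x₃) = (x₃,x₂,x₁)`
(resp. `η_i(x₁,x₃) = (x₃,x₁)` when the middle block is empty). -/
def blockSwap (d i : ℕ) (x : EuclideanSpace ℝ (Fin d)) : EuclideanSpace ℝ (Fin d) :=
  WithLp.toLp 2 (fun j => x (swapIdx d i j))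

/-- The three coordinate blocks of `ℝ^d ≅ ℝ^{i+1} × ℝ^{d−2i−2} × ℝ^{i+1}` (for
`i = (d−2)/2` the middle block is empty and this is `ℝ^{d/2} × ℝ^{d/2}`). -/
def blockSet (d i : ℕ) (k : Fin 3) : Set (Fin d) :=
  if k = 0 then {j : Fin d | (j : ℕ) < i + 1}
  else if k = 1 then {j : Fin d | i + 1 ≤ (j : ℕ) ∧ (j : ℕ) < d - (i + 1)}
  else {j : Fin d | d - (i + 1) ≤ (j : ℕ)}

/-- A linear isometry of `ℝ^d` is block-diagonal (i.e. belongs to the subgroup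
`H_{d,i} = O(i+1) × O(d−2i−2) × O(i+1)`, resp. `O(d/2) × O(d/2)`) iff it maps each of
the three coordinate subspaces into itself. -/
def IsBlockDiag (d i : ℕ)
    (g : EuclideanSpace ℝ (Fin d) ≃ₗᵢ[ℝ] EuclideanSpace ℝ (Fin d)) : Prop :=
  ∀ k : Fin 3, ∀ x : EuclideanSpace ℝ (Fin d),
    (∀ j : Fin d, j ∉ blockSet d i k → x j = 0) →
    ∀ j : Fin d, j ∉ blockSet d i k → g x j = 0

/-- `u` is `H_{d,η_i}`-invariant: `u(gx) = u(x)` a.e. for every `g ∈ H_{d,i}` and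
`u(η_i x) = −u(x)` a.e. -/
def HInvariant (d i : ℕ) (u : EuclideanSpace ℝ (Fin d) → ℝ) : Prop :=
  (∀ g : EuclideanSpace ℝ (Fin d) ≃ₗᵢ[ℝ] EuclideanSpace ℝ (Fin d),
    IsBlockDiag d i g → ∀ᵐ x ∂volume, u (g x) = u x) ∧
  (∀ᵐ x ∂volume, u (blockSwap d i x) = -u x)

noncomputable def permIso (d : ℕ) (σ : Equiv.Perm (Fin d)) :
    EuclideanSpace ℝ (Fin d) ≃ₗᵢ[ℝ] EuclideanSpace ℝ (Fin d) :=
  LinearIsometryEquiv.piLpCongrLeft 2 ℝ ℝ σ.symm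

lemma permIso_apply {d : ℕ} (σ : Equiv.Perm (Fin d)) (x : EuclideanSpace ℝ (Fin d)) (m : Fin d) :
    permIso d σ x m = x (σ m) := by
  simp [permIso, LinearIsometryEquiv.piLpCongrLeft_apply, Equiv.piCongrLeft']

def PInv (d : ℕ) (u : EuclideanSpace ℝ (Fin d) → ℝ) (σ : Equiv.Perm (Fin d)) : Prop :=
  ∀ᵐ x ∂(volume : Measure (EuclideanSpace ℝ (Fin d))), u (permIso d σ x) = u x

lemma PInv.one (d : ℕ) (u : EuclideanSpace ℝ (Fin d) → ℝ) : PInv d u 1 :=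
  Filter.Eventually.of_forall fun x => by
    have h : permIso d 1 x = x := by ext m; simp [permIso_apply]
    rw [h]

lemma PInv.mul {d : ℕ} {u : EuclideanSpace ℝ (Fin d) → ℝ} {σ τ : Equiv.Perm (Fin d)}
    (hσ : PInv d u σ) (hτ : PInv d u τ) : PInv d u (σ * τ) := by
  have hmp := (permIso d σ).measurePreserving
  have h2 : ∀ᵐ x ∂(volume : Measure (EuclideanSpace ℝ (Fin d))),
      u (permIso d τ (permIso d σ x)) = u (permIso d σ x) :=
    hmp.quasiMeasurePreserving.ae hτ
  filter_upwards [hσ, h2] with x h1 h2'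
  have he : permIso d (σ * τ) x = permIso d τ (permIso d σ x) := by
    ext m; simp [permIso_apply]
  rw [he, h2', h1]

lemma isBlockDiag_permIso {d : ℕ} (i' : ℕ) (σ : Equiv.Perm (Fin d))
    (h : ∀ (m : Fin d) (k : Fin 3), σ m ∈ blockSet d i' k ↔ m ∈ blockSet d i' k) :
    IsBlockDiag d i' (permIso d σ) := by
  intro k x hx m hm
  rw [permIso_apply]
  exact hx _ fun hmem => hm ((h m k).mp hmem)

lemma pinv_of_block {d : ℕ} (i' : ℕ) {u : EuclideanSpace ℝ (Fin d) → ℝ}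
    (hu1 : ∀ g : EuclideanSpace ℝ (Fin d) ≃ₗᵢ[ℝ] EuclideanSpace ℝ (Fin d),
      IsBlockDiag d i' g → ∀ᵐ x ∂volume, u (g x) = u x)
    (σ : Equiv.Perm (Fin d))
    (h : ∀ (m : Fin d) (k : Fin 3), σ m ∈ blockSet d i' k ↔ m ∈ blockSet d i' k) :
    PInv d u σ :=
  hu1 _ (isBlockDiag_permIso i' σ h)

lemma sameBlock_of {d : ℕ} (i' : ℕ) (a b : Fin d)
    (h0 : (a : ℕ) < i' + 1 ↔ (b : ℕ) < i' + 1)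
    (h1 : (i' + 1 ≤ (a : ℕ) ∧ (a : ℕ) < d - (i' + 1)) ↔
          (i' + 1 ≤ (b : ℕ) ∧ (b : ℕ) < d - (i' + 1)))
    (h2 : d - (i' + 1) ≤ (a : ℕ) ↔ d - (i' + 1) ≤ (b : ℕ)) :
    ∀ k : Fin 3, a ∈ blockSet d i' k ↔ b ∈ blockSet d i' k := by
  intro k
  fin_cases k <;> simp [blockSet, Set.mem_setOf_eq] <;> omega

lemma pinv_swap {d : ℕ} (i' : ℕ) {u : EuclideanSpace ℝ (Fin d) → ℝ}
    (hu1 : ∀ g : EuclideanSpace ℝ (Fin d) ≃ₗᵢ[ℝ] EuclideanSpace ℝ (Fin d),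
      IsBlockDiag d i' g → ∀ᵐ x ∂volume, u (g x) = u x)
    (a b : Fin d)
    (hab : ∀ k : Fin 3, a ∈ blockSet d i' k ↔ b ∈ blockSet d i' k) :
    PInv d u (Equiv.swap a b) := by
  apply pinv_of_block i' hu1
  intro m k
  rcases eq_or_ne m a with rfl | ha
  · rw [Equiv.swap_apply_left]; exact (hab k).symm
  rcases eq_or_ne m b with rfl | hb
  · rw [Equiv.swap_apply_right]; exact hab k
  · rw [Equiv.swap_apply_of_ne_of_ne ha hb]

lemma key (d i j : ℕ) (hij : i < j) (hd2 : 2*j+2 ≤ d) (hd3 : i+j+3 ≤ d)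
    (u : EuclideanSpace ℝ (Fin d) → ℝ)
    (hui : HInvariant d i u) (huj : HInvariant d j u) :
    u =ᵐ[volume] 0 := by
  have hd0 : 0 < d := by omega
  have hstar : 2*i+4 ≤ d := by omega
  set F : ℕ → Fin d := fun n => ⟨n % d, Nat.mod_lt _ hd0⟩ with hFdef
  have hFval : ∀ n, n < d → (F n : ℕ) = n := fun n h => Nat.mod_eq_of_lt h
  have hc : (F (i+1) : ℕ) = i + 1 := hFval _ (by omega)
  have he : (F (d-j-1) : ℕ) = d - j - 1 := hFval _ (by omega)
  -- invariance under each transposition (n ↔ d-1-i+n)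
  have hInvAB : ∀ n, n ≤ i → PInv d u (Equiv.swap (F n) (F (d-1-i+n))) := by
    intro n hn
    have ha : (F n : ℕ) = n := hFval _ (by omega)
    have hb : (F (d-1-i+n) : ℕ) = d-1-i+n := hFval _ (by omega)
    have hbc : F (d-1-i+n) ≠ F (i+1) := by
      intro h; have := congrArg Fin.val h; rw [hb, hc] at this; omega
    have hbe : F (d-1-i+n) ≠ F (d-j-1) := by
      intro h; have := congrArg Fin.val h; rw [hb, he] at this; omega
    have hba : F (d-1-i+n) ≠ F n := by
      intro h; have := congrArg Fin.val h; rw [hb, ha] at this; omega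
    have hdecomp : Equiv.swap (F n) (F (d-1-i+n)) =
        (Equiv.swap (F n) (F (i+1)) * Equiv.swap (F (i+1)) (F (d-j-1))) *
          Equiv.swap (F (d-j-1)) (F (d-1-i+n)) *
          (Equiv.swap (F (i+1)) (F (d-j-1)) * Equiv.swap (F n) (F (i+1))) := by
      have h := Equiv.swap_apply_apply
        (Equiv.swap (F n) (F (i+1)) * Equiv.swap (F (i+1)) (F (d-j-1)))
        (F (d-j-1)) (F (d-1-i+n))
      have h1 : (Equiv.swap (F n) (F (i+1)) * Equiv.swap (F (i+1)) (F (d-j-1))) (F (d-j-1))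
          = F n := by
        rw [Equiv.Perm.mul_apply, Equiv.swap_apply_right, Equiv.swap_apply_right]
      have h2 : (Equiv.swap (F n) (F (i+1)) * Equiv.swap (F (i+1)) (F (d-j-1))) (F (d-1-i+n))
          = F (d-1-i+n) := by
        rw [Equiv.Perm.mul_apply, Equiv.swap_apply_of_ne_of_ne hbc hbe,
          Equiv.swap_apply_of_ne_of_ne hba hbc]
      rw [h1, h2] at h
      rw [h, mul_inv_rev, Equiv.swap_inv, Equiv.swap_inv]
    rw [hdecomp]
    have s1 : PInv d u (Equiv.swap (F n) (F (i+1))) := by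
      refine pinv_swap j huj.1 _ _ (sameBlock_of j _ _ ?_ ?_ ?_) <;> rw [ha, hc] <;> omega
    have s2 : PInv d u (Equiv.swap (F (i+1)) (F (d-j-1))) := by
      refine pinv_swap i hui.1 _ _ (sameBlock_of i _ _ ?_ ?_ ?_) <;> rw [hc, he] <;> omega
    have s3 : PInv d u (Equiv.swap (F (d-j-1)) (F (d-1-i+n))) := by
      refine pinv_swap j huj.1 _ _ (sameBlock_of j _ _ ?_ ?_ ?_) <;> rw [he, hb] <;> omega
    exact ((s1.mul s2).mul s3).mul (s2.mul s1)
  -- partial products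
  set P : ℕ → Equiv.Perm (Fin d) :=
    fun n => ((List.range n).map fun k => Equiv.swap (F k) (F (d-1-i+k))).prod with hPdef
  have hPsucc : ∀ n, P (n+1) = P n * Equiv.swap (F n) (F (d-1-i+n)) := by
    intro n
    simp [hPdef, List.range_succ]
  have hPInv : ∀ n, n ≤ i + 1 → PInv d u (P n) := by
    intro n
    induction n with
    | zero => intro _; exact PInv.one d u
    | succ n ih =>
      intro hn
      rw [hPsucc n]
      exact (ih (by omega)).mul (hInvAB n (by omega))
  have hPval : ∀ n, n ≤ i + 1 → ∀ m : Fin d, ((P n) m : ℕ) =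
      if (m : ℕ) < n then (m : ℕ) + (d-1-i)
      else if d-1-i ≤ (m : ℕ) ∧ (m : ℕ) < d-1-i+n then (m : ℕ) - (d-1-i)
      else (m : ℕ) := by
    intro n
    induction n with
    | zero =>
      intro _ m
      have : P 0 = 1 := by simp [hPdef]
      rw [this]
      simp only [Equiv.Perm.one_apply]
      have := m.isLt
      split_ifs <;> omega
    | succ n ih =>
      intro hn m
      have ha : (F n : ℕ) = n := hFval _ (by omega)
      have hb : (F (d-1-i+n) : ℕ) = d-1-i+n := hFval _ (by omega)
      have hm := m.isLt
      rw [hPsucc n, Equiv.Perm.mul_apply]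
      rcases eq_or_ne m (F n) with rfl | h1
      · rw [Equiv.swap_apply_left, ih (by omega)]
        rw [ha, hb]
        split_ifs <;> omega
      rcases eq_or_ne m (F (d-1-i+n)) with rfl | h2
      · rw [Equiv.swap_apply_right, ih (by omega)]
        rw [ha, hb]
        split_ifs <;> omega
      · have hv1 : (m : ℕ) ≠ n := fun hh => h1 (Fin.val_injective (by rw [ha]; exact hh))
        have hv2 : (m : ℕ) ≠ d-1-i+n := fun hh => h2 (Fin.val_injective (by rw [hb]; exact hh))
        rw [Equiv.swap_apply_of_ne_of_ne h1 h2, ih (by omega)]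
        split_ifs <;> omega
  -- P (i+1) is the block swap
  have hswapEq : ∀ m : Fin d, (P (i+1)) m = swapIdx d i m := by
    intro m
    have hm := m.isLt
    apply Fin.val_injective
    rw [hPval (i+1) le_rfl m]
    show _ = _ % d
    rw [Nat.mod_eq_of_lt (by split_ifs <;> omega)]
    split_ifs <;> omega
  have hEven : ∀ᵐ x ∂(volume : Measure (EuclideanSpace ℝ (Fin d))),
      u (blockSwap d i x) = u x := by
    filter_upwards [hPInv (i+1) le_rfl] with x hx
    have hbe : blockSwap d i x = permIso d (P (i+1)) x := by
      ext m
      rw [permIso_apply, hswapEq]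
      rfl
    rw [hbe]
    exact hx
  filter_upwards [hui.2, hEven] with x h1 h2
  have : u x = 0 := by
    have := h1.symm.trans h2
    linarith
  simpa using this

/-- Let `d = 6` or `d ≥ 8`, `τ_d = (−1)^d + ⌊(d−3)/2⌋`, and `i ≠ j ∈ J_d = {1,…,τ_d}`.
If `u ∈ L²(ℝ^d)` is both `H_{d,η_i}`-invariant and `H_{d,η_j}`-invariant, then `u = 0`
almost everywhere. -/
theorem stmt_16 (d i j : ℕ) (hd : d = 6 ∨ 8 ≤ d)
    (hi : 1 ≤ (i : ℤ) ∧ (i : ℤ) ≤ (-1 : ℤ) ^ d + ((d : ℤ) - 3) / 2)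
    (hj : 1 ≤ (j : ℤ) ∧ (j : ℤ) ≤ (-1 : ℤ) ^ d + ((d : ℤ) - 3) / 2)
    (hij : i ≠ j)
    (u : EuclideanSpace ℝ (Fin d) → ℝ) (hu : MemLp u 2 volume)
    (hui : HInvariant d i u) (huj : HInvariant d j u) :
    u =ᵐ[volume] 0 := by
  obtain ⟨hi1, hi2⟩ := hi
  obtain ⟨hj1, hj2⟩ := hj
  have hpow : ((-1 : ℤ) ^ d = 1 ∧ d % 2 = 0) ∨ ((-1 : ℤ) ^ d = -1 ∧ d % 2 = 1) := by
    rcases Nat.even_or_odd d with h | h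
    · exact Or.inl ⟨h.neg_one_pow, Nat.even_iff.mp h⟩
    · exact Or.inr ⟨h.neg_one_pow, Nat.odd_iff.mp h⟩
  rcases Nat.lt_or_ge i j with hlt | hge
  · have harith : 2*j+2 ≤ d ∧ i+j+3 ≤ d := by
      rcases hpow with ⟨h, hm⟩ | ⟨h, hm⟩ <;> rw [h] at hi2 hj2 <;> omega
    exact key d i j hlt harith.1 harith.2 u hui huj
  · have hlt : j < i := by omega
    have harith : 2*i+2 ≤ d ∧ j+i+3 ≤ d := by
      rcases hpow with ⟨h, hm⟩ | ⟨h, hm⟩ <;> rw [h] at hi2 hj2 <;> omega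
    exact key d j i hlt harith.1 harith.2 u huj hui
end
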